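/- arXiv:2007.05787 — 3 statements merged into one kernel-verified Lean document; each statement's English description precedes it below -/
import Mathlib

section
/- Diagonalization of the relativistic Euler velocity equation: Let O ⊂ ℝ^{1+d} be open and let (ϱ,u) be a C¹ solution of the relativistic Euler equations on O with ϱ > 0, p(ϱ) + ϱ > 0, u⁰ > 0 and u^α u_α = −1. Let f : (0,∞) → (0,∞) be C¹ with f'(y)/f(y) = p'(y)/(p(y)+y) for all y > 0, and set v^α = f(ϱ)u^α. Then for every α = 0,…,d, on O: ∂_t v^α + (v^i/v⁰)∂_i v^α + (c_s²(ϱ) f(ϱ)² / ((p(ϱ)+ϱ) v⁰)) m^{αμ} ∂_μ ϱ = 0, where c_s² = p'(ϱ). Moreover v⁰ = √( f(ϱ)² + |v|² ) with |v|² = Σ_i (v^i)². -/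
open Set

noncomputable section

/-- The diagonal entries of the Minkowski metric `m = diag(−1,1,…,1)` on `ℝ^{1+d}`. -/
def mlt (d : ℕ) (α : Fin (d + 1)) : ℝ := if α = 0 then -1 else 1

/-- Partial derivative `∂_μ` of a function on `ℝ^{1+d}`. -/
def pder (d : ℕ) (μ : Fin (d + 1)) (F : (Fin (d + 1) → ℝ) → ℝ) (q : Fin (d + 1) → ℝ) : ℝ :=
  fderiv ℝ F q (Pi.single μ 1)

/-- The relativistic Euler equations with equation of state `peos` on the set `O`:
`u^μ ∂_μ ϱ + (p+ϱ) ∂_μ u^μ = 0` and `(p+ϱ) u^μ ∂_μ u_α + Π^μ_α ∂_μ p = 0`, where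
`Π^μ_α = δ^μ_α + u^μ u_α` and indices are lowered with `m = diag(−1,1,…,1)`. -/
def RelEuler (d : ℕ) (peos : ℝ → ℝ) (O : Set (Fin (d + 1) → ℝ))
    (ϱ : (Fin (d + 1) → ℝ) → ℝ) (u : (Fin (d + 1) → ℝ) → Fin (d + 1) → ℝ) : Prop :=
  ∀ q ∈ O,
    ((∑ μ, u q μ * pder d μ ϱ q)
      + (peos (ϱ q) + ϱ q) * ∑ μ, pder d μ (fun z => u z μ) q = 0) ∧
    ∀ α, (peos (ϱ q) + ϱ q) * (∑ μ, u q μ * pder d μ (fun z => mlt d α * u z α) q)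
        + pder d α (fun z => peos (ϱ z)) q
        + mlt d α * u q α * ∑ μ, u q μ * pder d μ (fun z => peos (ϱ z)) q = 0

/-- **Diagonalization of the velocity equation** (equation (1.12)): for a `C¹` solution
`(ϱ,u)` of the relativistic Euler equations with `ϱ > 0`, `p+ϱ > 0`, `u⁰ > 0`,
`u^αu_α = −1`, and `v^α = f(ϱ)u^α` with `f'/f = p'/(p+ϱ)`, one has
`D_t v^α + (c_s² f²/((p+ϱ)v⁰)) m^{αμ} ∂_μ ϱ = 0` and `v⁰ = √(f² + |v|²)`. -/
theorem relativistic_euler_velocity_diagonalization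
    (d : ℕ) (hd : 1 ≤ d) (peos f : ℝ → ℝ)
    (O : Set (Fin (d + 1) → ℝ)) (hO : IsOpen O)
    (ϱ : (Fin (d + 1) → ℝ) → ℝ) (u : (Fin (d + 1) → ℝ) → Fin (d + 1) → ℝ)
    (hp : ContDiffOn ℝ 1 peos (Ioi 0))
    (hϱ : ContDiffOn ℝ 1 ϱ O) (hu : ContDiffOn ℝ 1 u O)
    (hϱpos : ∀ q ∈ O, 0 < ϱ q)
    (hpϱ : ∀ q ∈ O, 0 < peos (ϱ q) + ϱ q)
    (hu0 : ∀ q ∈ O, 0 < u q 0)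
    (hnorm : ∀ q ∈ O, ∑ α, mlt d α * u q α * u q α = -1)
    (hf : ContDiffOn ℝ 1 f (Ioi 0)) (hfpos : ∀ y > (0 : ℝ), 0 < f y)
    (hfode : ∀ y > (0 : ℝ), deriv f y * (peos y + y) = deriv peos y * f y)
    (heuler : RelEuler d peos O ϱ u) :
    ∀ q ∈ O, ∀ α : Fin (d + 1),
      (pder d 0 (fun z => f (ϱ z) * u z α) q
        + (∑ i : Fin d, (f (ϱ q) * u q i.succ / (f (ϱ q) * u q 0))
            * pder d i.succ (fun z => f (ϱ z) * u z α) q)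
        + (deriv peos (ϱ q) * f (ϱ q) ^ 2
            / ((peos (ϱ q) + ϱ q) * (f (ϱ q) * u q 0))) * mlt d α * pder d α ϱ q = 0)
      ∧ f (ϱ q) * u q 0
          = Real.sqrt (f (ϱ q) ^ 2 + ∑ i : Fin d, (f (ϱ q) * u q i.succ) ^ 2) := by
  intro q hq α
  have hϱq : 0 < ϱ q := hϱpos q hq
  have hϱq' : ϱ q ∈ Ioi (0 : ℝ) := hϱq
  have hPq : 0 < peos (ϱ q) + ϱ q := hpϱ q hq
  have hu0q : 0 < u q 0 := hu0 q hq
  have hfq : 0 < f (ϱ q) := hfpos _ hϱq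
  have hu0ne : u q 0 ≠ 0 := hu0q.ne'
  have hf0ne : f (ϱ q) ≠ 0 := hfq.ne'
  have hPne : peos (ϱ q) + ϱ q ≠ 0 := hPq.ne'
  have hϱd : DifferentiableAt ℝ ϱ q :=
    (hϱ.differentiableOn one_ne_zero q hq).differentiableAt (hO.mem_nhds hq)
  have hud : DifferentiableAt ℝ u q :=
    (hu.differentiableOn one_ne_zero q hq).differentiableAt (hO.mem_nhds hq)
  have hudc : ∀ β, DifferentiableAt ℝ (fun z => u z β) q := differentiableAt_pi.mp hud
  have hfd : DifferentiableAt ℝ f (ϱ q) :=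
    ((hf.differentiableOn one_ne_zero) _ hϱq').differentiableAt (isOpen_Ioi.mem_nhds hϱq')
  have hpd : DifferentiableAt ℝ peos (ϱ q) :=
    ((hp.differentiableOn one_ne_zero) _ hϱq').differentiableAt (isOpen_Ioi.mem_nhds hϱq')
  -- chain rule
  have chain : ∀ (g : ℝ → ℝ), DifferentiableAt ℝ g (ϱ q) → ∀ μ : Fin (d + 1),
      pder d μ (fun z => g (ϱ z)) q = deriv g (ϱ q) * pder d μ ϱ q := by
    intro g hg μ
    have h := (hg.hasDerivAt.comp_hasFDerivAt q hϱd.hasFDerivAt)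
    show fderiv ℝ (fun z => g (ϱ z)) q (Pi.single μ 1) = _
    rw [show (fun z => g (ϱ z)) = g ∘ ϱ from rfl, h.fderiv]
    simp [pder]
  -- product rule
  have prodr : ∀ (μ : Fin (d + 1)) (F G : (Fin (d + 1) → ℝ) → ℝ),
      DifferentiableAt ℝ F q → DifferentiableAt ℝ G q →
      pder d μ (fun z => F z * G z) q = pder d μ F q * G q + F q * pder d μ G q := by
    intro μ F G hF hG
    show fderiv ℝ (fun z => F z * G z) q (Pi.single μ 1) = _
    rw [fderiv_fun_mul hF hG]
    simp only [ContinuousLinearMap.add_apply, ContinuousLinearMap.coe_smul',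
      Pi.smul_apply, smul_eq_mul, pder]
    ring
  -- constant multiple
  have cmul : ∀ (μ : Fin (d + 1)) (c : ℝ) (F : (Fin (d + 1) → ℝ) → ℝ),
      DifferentiableAt ℝ F q →
      pder d μ (fun z => c * F z) q = c * pder d μ F q := by
    intro μ c F hF
    show fderiv ℝ (fun z => c * F z) q (Pi.single μ 1) = _
    rw [fderiv_const_mul hF]
    simp [pder]
  -- derivative of v^α = f(ϱ) u^α
  have hDv : ∀ μ : Fin (d + 1), pder d μ (fun z => f (ϱ z) * u z α) q
      = deriv f (ϱ q) * pder d μ ϱ q * u q α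
        + f (ϱ q) * pder d μ (fun z => u z α) q := by
    intro μ
    rw [prodr μ (fun z => f (ϱ z)) (fun z => u z α) (hfd.comp q hϱd) (hudc α), chain f hfd μ]
  -- Euler momentum equation, simplified
  have h1 : ∑ μ, u q μ * pder d μ (fun z => mlt d α * u z α) q
      = mlt d α * ∑ μ, u q μ * pder d μ (fun z => u z α) q := by
    rw [Finset.mul_sum]
    refine Finset.sum_congr rfl fun μ _ => ?_
    rw [cmul μ (mlt d α) _ (hudc α)]
    ring
  have h2 : ∑ μ, u q μ * pder d μ (fun z => peos (ϱ z)) q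
      = deriv peos (ϱ q) * ∑ μ, u q μ * pder d μ ϱ q := by
    rw [Finset.mul_sum]
    refine Finset.sum_congr rfl fun μ _ => ?_
    rw [chain peos hpd μ]
    ring
  have hm := (heuler q hq).2 α
  rw [h1, h2, chain peos hpd α] at hm
  have hm2 : mlt d α * mlt d α = 1 := by unfold mlt; split <;> norm_num
  have hode := hfode (ϱ q) hϱq
  constructor
  · have hsum : pder d 0 (fun z => f (ϱ z) * u z α) q
        + ∑ i : Fin d, (f (ϱ q) * u q i.succ / (f (ϱ q) * u q 0))
            * pder d i.succ (fun z => f (ϱ z) * u z α) q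
        = (∑ μ, u q μ * pder d μ (fun z => f (ϱ z) * u z α) q) / u q 0 := by
      rw [Fin.sum_univ_succ (fun μ => u q μ * pder d μ (fun z => f (ϱ z) * u z α) q),
        add_div, Finset.sum_div]
      congr 1
      · field_simp
      · refine Finset.sum_congr rfl fun i _ => ?_
        field_simp
    have hSv : ∑ μ, u q μ * pder d μ (fun z => f (ϱ z) * u z α) q
        = deriv f (ϱ q) * u q α * (∑ μ, u q μ * pder d μ ϱ q)
          + f (ϱ q) * ∑ μ, u q μ * pder d μ (fun z => u z α) q := by
      calc ∑ μ, u q μ * pder d μ (fun z => f (ϱ z) * u z α) q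
          = ∑ μ, (deriv f (ϱ q) * u q α * (u q μ * pder d μ ϱ q)
              + f (ϱ q) * (u q μ * pder d μ (fun z => u z α) q)) := by
            refine Finset.sum_congr rfl fun μ _ => ?_
            rw [hDv μ]; ring
        _ = _ := by rw [Finset.sum_add_distrib, ← Finset.mul_sum, ← Finset.mul_sum]
    rw [hsum, hSv]
    field_simp
    linear_combination (f (ϱ q) * mlt d α) * hm
      + (u q α * (∑ μ, u q μ * pder d μ ϱ q)) * hode
      - (f (ϱ q) * ((peos (ϱ q) + ϱ q)
          * (∑ μ, u q μ * pder d μ (fun z => u z α) q)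
          + u q α * deriv peos (ϱ q) * (∑ μ, u q μ * pder d μ ϱ q))) * hm2
  · have hn := hnorm q hq
    rw [Fin.sum_univ_succ] at hn
    have hm0 : mlt d (0 : Fin (d + 1)) = -1 := by simp [mlt]
    have hms : ∀ i : Fin d, mlt d i.succ = 1 := fun i => by
      simp [mlt, Fin.succ_ne_zero i]
    simp only [hm0, hms, one_mul, neg_one_mul] at hn
    have hpos : 0 ≤ f (ϱ q) * u q 0 := le_of_lt (by positivity)
    have hsq : f (ϱ q) ^ 2 + ∑ i : Fin d, (f (ϱ q) * u q i.succ) ^ 2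
        = (f (ϱ q) * u q 0) ^ 2 := by
      have hs : ∑ i : Fin d, (f (ϱ q) * u q i.succ) ^ 2
          = f (ϱ q) ^ 2 * ∑ i : Fin d, u q i.succ * u q i.succ := by
        rw [Finset.mul_sum]
        exact Finset.sum_congr rfl fun i _ => by ring
      rw [hs]
      linear_combination (f (ϱ q) ^ 2) * hn
    rw [hsq, Real.sqrt_sq hpos]
end
end

section
/- Diagonalization of the relativistic Euler density equation: Let O ⊂ ℝ^{1+d} be open and let (ϱ,u) be a C¹ solution of the relativistic Euler equations on O with ϱ > 0, p(ϱ)+ϱ > 0, u⁰ > 0, u^α u_α = −1, and 0 ≤ c_s²(ϱ) := p'(ϱ) ≤ 1. Let f : (0,∞) → (0,∞) be C¹ with f'(y)/f(y) = p'(y)/(p(y)+y), and set v^α = f(ϱ)u^α and a₀ = 1 − c_s² |v|²/(v⁰)², which is positive. Then on O: ∂_t ϱ + (v^i/v⁰)∂_i ϱ + ((p+ϱ)/(a₀ v⁰)) (δ^{ij} − v^i v^j/(v⁰)²) ∂_i v_j − (2 c_s² f² / (a₀ (v⁰)³)) v^i ∂_i ϱ = 0. -/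
open Set

noncomputable section

/-- `fderiv` of a real function applied to a vector, via `deriv`. -/
lemma fderiv_apply_real (g : ℝ → ℝ) (x v : ℝ) : fderiv ℝ g x v = v * deriv g x := by
  have := (fderiv ℝ g x).map_smul v (1:ℝ)
  simpa [fderiv_apply_one_eq_deriv] using this

lemma pder_comp {d : ℕ} {g : ℝ → ℝ} {ϱ : (Fin (d+1) → ℝ) → ℝ} {q : Fin (d+1) → ℝ}
    (hg : DifferentiableAt ℝ g (ϱ q)) (hϱ : DifferentiableAt ℝ ϱ q) (μ : Fin (d+1)) :
    pder d μ (fun z => g (ϱ z)) q = deriv g (ϱ q) * pder d μ ϱ q := by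
  unfold pder
  rw [show (fun z => g (ϱ z)) = g ∘ ϱ from rfl, fderiv_comp q hg hϱ]
  rw [ContinuousLinearMap.comp_apply, fderiv_apply_real]
  ring

lemma pder_mul {d : ℕ} {a b : (Fin (d+1) → ℝ) → ℝ} {q : Fin (d+1) → ℝ}
    (ha : DifferentiableAt ℝ a q) (hb : DifferentiableAt ℝ b q) (μ : Fin (d+1)) :
    pder d μ (fun z => a z * b z) q = a q * pder d μ b q + b q * pder d μ a q := by
  unfold pder
  rw [fderiv_fun_mul ha hb]
  simp

lemma pder_const_mul {d : ℕ} {a : (Fin (d+1) → ℝ) → ℝ} {q : Fin (d+1) → ℝ}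
    (ha : DifferentiableAt ℝ a q) (k : ℝ) (μ : Fin (d+1)) :
    pder d μ (fun z => k * a z) q = k * pder d μ a q := by
  unfold pder
  rw [fderiv_const_mul ha]
  simp

/-- Differentiating the normalization `∑ m_α u^α u^α = −1` on an open set. -/
lemma pder_norm {d : ℕ} (mm : Fin (d+1) → ℝ) {O : Set (Fin (d+1) → ℝ)} (hO : IsOpen O)
    {u : (Fin (d+1) → ℝ) → Fin (d+1) → ℝ} {q : Fin (d+1) → ℝ} (hq : q ∈ O)
    (hu : ∀ α, DifferentiableAt ℝ (fun z => u z α) q)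
    (hnorm : ∀ z ∈ O, ∑ α, mm α * u z α * u z α = -1) (μ : Fin (d+1)) :
    ∑ α, mm α * u q α * pder d μ (fun z => u z α) q = 0 := by
  have hdiff : ∀ α : Fin (d+1), DifferentiableAt ℝ (fun z => mm α * u z α * u z α) q :=
    fun α => ((hu α).const_mul (mm α)).mul (hu α)
  have heq : (fun z => ∑ α, mm α * u z α * u z α) =ᶠ[nhds q] (fun _ => (-1:ℝ)) := by
    filter_upwards [hO.mem_nhds hq] with z hz using hnorm z hz
  have h0 : fderiv ℝ (fun z => ∑ α, mm α * u z α * u z α) q = 0 := by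
    rw [heq.fderiv_eq]; exact fderiv_const_apply _
  have hsum : pder d μ (fun z => ∑ α, mm α * u z α * u z α) q
      = ∑ α, pder d μ (fun z => mm α * u z α * u z α) q := by
    unfold pder
    rw [fderiv_fun_sum (fun α _ => hdiff α)]
    simp
  have hterm : ∀ α, pder d μ (fun z => mm α * u z α * u z α) q
      = 2 * (mm α * u q α * pder d μ (fun z => u z α) q) := by
    intro α
    have h1 : pder d μ (fun z => (mm α * u z α) * u z α) q
        = (mm α * u q α) * pder d μ (fun z => u z α) q
          + u q α * pder d μ (fun z => mm α * u z α) q :=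
      pder_mul ((hu α).const_mul (mm α)) (hu α) μ
    rw [show (fun z => mm α * u z α * u z α) = (fun z => (mm α * u z α) * u z α) from rfl, h1,
      pder_const_mul (hu α)]
    ring
  have hz : pder d μ (fun z => ∑ α, mm α * u z α * u z α) q = 0 := by
    unfold pder; rw [h0]; simp
  rw [hsum] at hz
  simp only [hterm] at hz
  rw [← Finset.mul_sum] at hz
  linarith

/-- **Diagonalization of the density equation** (equation (1.13)): for a `C¹` solution
`(ϱ,u)` of the relativistic Euler equations with `ϱ > 0`, `p+ϱ > 0`, `u⁰ > 0`,
`u^αu_α = −1`, `0 ≤ c_s² ≤ 1`, and `v^α = f(ϱ)u^α` with `f'/f = p'/(p+ϱ)`, the quantity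
`a₀ = 1 − c_s²|v|²/(v⁰)²` is positive and
`D_t ϱ + ((p+ϱ)/(a₀v⁰))(δ^{ij} − v^iv^j/(v⁰)²)∂_i v_j − (2c_s²f²/(a₀(v⁰)³)) v^i∂_i ϱ = 0`. -/
theorem relativistic_euler_density_diagonalization
    (d : ℕ) (hd : 1 ≤ d) (peos f : ℝ → ℝ)
    (O : Set (Fin (d + 1) → ℝ)) (hO : IsOpen O)
    (ϱ : (Fin (d + 1) → ℝ) → ℝ) (u : (Fin (d + 1) → ℝ) → Fin (d + 1) → ℝ)
    (hp : ContDiffOn ℝ 1 peos (Ioi 0))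
    (hϱ : ContDiffOn ℝ 1 ϱ O) (hu : ContDiffOn ℝ 1 u O)
    (hϱpos : ∀ q ∈ O, 0 < ϱ q)
    (hpϱ : ∀ q ∈ O, 0 < peos (ϱ q) + ϱ q)
    (hu0 : ∀ q ∈ O, 0 < u q 0)
    (hnorm : ∀ q ∈ O, ∑ α, mlt d α * u q α * u q α = -1)
    (hcs : ∀ q ∈ O, 0 ≤ deriv peos (ϱ q) ∧ deriv peos (ϱ q) ≤ 1)
    (hf : ContDiffOn ℝ 1 f (Ioi 0)) (hfpos : ∀ y > (0 : ℝ), 0 < f y)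
    (hfode : ∀ y > (0 : ℝ), deriv f y * (peos y + y) = deriv peos y * f y)
    (heuler : RelEuler d peos O ϱ u) :
    ∀ q ∈ O,
      (0 < 1 - deriv peos (ϱ q) * (∑ i : Fin d, (f (ϱ q) * u q i.succ) ^ 2)
            / (f (ϱ q) * u q 0) ^ 2) ∧
      pder d 0 ϱ q
        + (∑ i : Fin d, (f (ϱ q) * u q i.succ / (f (ϱ q) * u q 0)) * pder d i.succ ϱ q)
        + ((peos (ϱ q) + ϱ q)
              / ((1 - deriv peos (ϱ q) * (∑ i : Fin d, (f (ϱ q) * u q i.succ) ^ 2)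
                    / (f (ϱ q) * u q 0) ^ 2) * (f (ϱ q) * u q 0)))
            * (∑ i : Fin d, ∑ j : Fin d,
                ((if i = j then (1 : ℝ) else 0)
                    - (f (ϱ q) * u q i.succ) * (f (ϱ q) * u q j.succ)
                        / (f (ϱ q) * u q 0) ^ 2)
                  * pder d i.succ (fun z => f (ϱ z) * u z j.succ) q)
        - (2 * deriv peos (ϱ q) * f (ϱ q) ^ 2
              / ((1 - deriv peos (ϱ q) * (∑ i : Fin d, (f (ϱ q) * u q i.succ) ^ 2)
                    / (f (ϱ q) * u q 0) ^ 2) * (f (ϱ q) * u q 0) ^ 3))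
            * ∑ i : Fin d, (f (ϱ q) * u q i.succ) * pder d i.succ ϱ q = 0 := by
  intro q hq
  have hρ : 0 < ϱ q := hϱpos q hq
  have hPpos : 0 < peos (ϱ q) + ϱ q := hpϱ q hq
  have hu0p : 0 < u q 0 := hu0 q hq
  have hFpos : 0 < f (ϱ q) := hfpos _ hρ
  obtain ⟨hc0, hc1⟩ := hcs q hq
  have hϱd : DifferentiableAt ℝ ϱ q :=
    (hϱ.differentiableOn one_ne_zero).differentiableAt (hO.mem_nhds hq)
  have hud' : DifferentiableAt ℝ u q :=
    (hu.differentiableOn one_ne_zero).differentiableAt (hO.mem_nhds hq)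
  have hud : ∀ α, DifferentiableAt ℝ (fun z => u z α) q := differentiableAt_pi.mp hud'
  have hpd : DifferentiableAt ℝ peos (ϱ q) :=
    (hp.differentiableOn one_ne_zero).differentiableAt (isOpen_Ioi.mem_nhds hρ)
  have hfd : DifferentiableAt ℝ f (ϱ q) :=
    (hf.differentiableOn one_ne_zero).differentiableAt (isOpen_Ioi.mem_nhds hρ)
  have hm0 : mlt d 0 = -1 := by simp [mlt]
  have hm1 : ∀ j : Fin d, mlt d j.succ = 1 := fun j => by
    simp [mlt, Fin.succ_ne_zero]
  -- normalization consequences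
  have hWeq : ∑ i : Fin d, (u q i.succ)^2 = u q 0^2 - 1 := by
    have h := hnorm q hq
    rw [Fin.sum_univ_succ] at h
    simp only [hm0, hm1, one_mul] at h
    have hsq : ∑ i : Fin d, (u q i.succ)^2 = ∑ i : Fin d, u q i.succ * u q i.succ :=
      Finset.sum_congr rfl fun i _ => sq (u q i.succ)
    rw [hsq]; nlinarith [h]
  have hWnn : (0:ℝ) ≤ u q 0^2 - 1 := by
    rw [← hWeq]; exact Finset.sum_nonneg fun i _ => sq_nonneg _
  -- chain rules
  have hch : ∀ μ, pder d μ (fun z => peos (ϱ z)) q = deriv peos (ϱ q) * pder d μ ϱ q :=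
    pder_comp hpd hϱd
  have hprod : ∀ (μ j : Fin (d+1)), pder d μ (fun z => f (ϱ z) * u z j) q
      = f (ϱ q) * pder d μ (fun z => u z j) q
        + u q j * (deriv f (ϱ q) * pder d μ ϱ q) := by
    intro μ j
    have h1 : pder d μ (fun z => f (ϱ z) * u z j) q
        = f (ϱ q) * pder d μ (fun z => u z j) q
          + u q j * pder d μ (fun z => f (ϱ z)) q :=
      pder_mul (hfd.comp q hϱd) (hud j) μ
    rw [h1, pder_comp hfd hϱd μ]
  -- norm derivative
  have hN : ∀ μ, ∑ α, mlt d α * u q α * pder d μ (fun z => u z α) q = 0 :=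
    pder_norm (mlt d) hO hq hud hnorm
  -- scalar equations
  have he1 : u q 0 * pder d 0 ϱ q + (∑ i : Fin d, u q i.succ * pder d i.succ ϱ q)
      + (peos (ϱ q) + ϱ q) * (pder d 0 (fun z => u z 0) q
        + ∑ i : Fin d, pder d i.succ (fun z => u z i.succ) q) = 0 := by
    have h := (heuler q hq).1
    rw [Fin.sum_univ_succ, Fin.sum_univ_succ] at h
    linear_combination h
  have he2 : -((peos (ϱ q) + ϱ q) * (u q 0 * pder d 0 (fun z => u z 0) q
        + ∑ i : Fin d, u q i.succ * pder d i.succ (fun z => u z 0) q))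
      + deriv peos (ϱ q) * pder d 0 ϱ q
      - u q 0 * deriv peos (ϱ q) * (u q 0 * pder d 0 ϱ q
        + ∑ i : Fin d, u q i.succ * pder d i.succ ϱ q) = 0 := by
    have h2 := (heuler q hq).2 0
    have hcm : ∀ μ, pder d μ (fun z => mlt d 0 * u z 0) q
        = mlt d 0 * pder d μ (fun z => u z 0) q :=
      fun μ => pder_const_mul (hud 0) (mlt d 0) μ
    simp only [hcm] at h2
    simp only [hch, hm0] at h2
    rw [Fin.sum_univ_succ, Fin.sum_univ_succ] at h2
    have ht : ∑ i : Fin d, u q i.succ * (-1 * pder d i.succ (fun z => u z 0) q)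
        = -∑ i : Fin d, u q i.succ * pder d i.succ (fun z => u z 0) q := by
      rw [← Finset.sum_neg_distrib]
      exact Finset.sum_congr rfl fun i _ => by ring
    have hs : ∑ i : Fin d, u q i.succ * (deriv peos (ϱ q) * pder d i.succ ϱ q)
        = deriv peos (ϱ q) * ∑ i : Fin d, u q i.succ * pder d i.succ ϱ q := by
      rw [Finset.mul_sum]
      exact Finset.sum_congr rfl fun i _ => by ring
    rw [ht, hs] at h2
    linear_combination h2
  have hNi : ∀ i : Fin d, ∑ j : Fin d, u q j.succ * pder d i.succ (fun z => u z j.succ) q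
      = u q 0 * pder d i.succ (fun z => u z 0) q := by
    intro i
    have h := hN i.succ
    rw [Fin.sum_univ_succ] at h
    simp only [hm0, hm1, one_mul] at h
    linarith
  have he5 : ∑ i : Fin d, ∑ j : Fin d,
        u q i.succ * u q j.succ * pder d i.succ (fun z => u z j.succ) q
      = u q 0 * ∑ i : Fin d, u q i.succ * pder d i.succ (fun z => u z 0) q := by
    calc ∑ i : Fin d, ∑ j : Fin d,
          u q i.succ * u q j.succ * pder d i.succ (fun z => u z j.succ) q
        = ∑ i : Fin d, u q i.succ *
            ∑ j : Fin d, u q j.succ * pder d i.succ (fun z => u z j.succ) q := by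
          refine Finset.sum_congr rfl fun i _ => ?_
          rw [Finset.mul_sum]
          exact Finset.sum_congr rfl fun j _ => by ring
      _ = ∑ i : Fin d, u q i.succ * (u q 0 * pder d i.succ (fun z => u z 0) q) :=
          Finset.sum_congr rfl fun i _ => by rw [hNi i]
      _ = u q 0 * ∑ i : Fin d, u q i.succ * pder d i.succ (fun z => u z 0) q := by
          rw [Finset.mul_sum]
          exact Finset.sum_congr rfl fun i _ => by ring
  have hf' : deriv f (ϱ q) * (peos (ϱ q) + ϱ q) = deriv peos (ϱ q) * f (ϱ q) :=
    hfode (ϱ q) hρ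
  -- rewrite the |v|² sum and the a₀ expression
  have R1 : ∑ i : Fin d, (f (ϱ q) * u q i.succ)^2 = f (ϱ q)^2 * (u q 0^2 - 1) := by
    calc ∑ i : Fin d, (f (ϱ q) * u q i.succ)^2
        = f (ϱ q)^2 * ∑ i : Fin d, (u q i.succ)^2 := by
          rw [Finset.mul_sum]
          exact Finset.sum_congr rfl fun i _ => by ring
      _ = f (ϱ q)^2 * (u q 0^2 - 1) := by rw [hWeq]
  have R2 : (1:ℝ) - deriv peos (ϱ q) * (f (ϱ q)^2 * (u q 0^2 - 1)) / (f (ϱ q) * u q 0)^2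
      = (u q 0^2 - deriv peos (ϱ q) * (u q 0^2 - 1)) / u q 0^2 := by
    field_simp
  have hKpos : 0 < u q 0^2 - deriv peos (ϱ q) * (u q 0^2 - 1) := by nlinarith
  rw [R1, R2]
  constructor
  · exact div_pos hKpos (pow_pos hu0p 2)
  -- rewrite remaining sums
  have R3 : ∑ i : Fin d, f (ϱ q) * u q i.succ / (f (ϱ q) * u q 0) * pder d i.succ ϱ q
      = (∑ i : Fin d, u q i.succ * pder d i.succ ϱ q) / u q 0 := by
    rw [Finset.sum_div]
    refine Finset.sum_congr rfl fun i _ => ?_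
    rw [mul_div_mul_left _ _ hFpos.ne']
    ring
  have hcancel : ∀ a b : ℝ, (f (ϱ q) * a) * (f (ϱ q) * b) / (f (ϱ q) * u q 0)^2
      = a * b / (u q 0)^2 := by
    intro a b
    rw [mul_pow, show (f (ϱ q) * a) * (f (ϱ q) * b) = f (ϱ q)^2 * (a * b) by ring]
    exact mul_div_mul_left _ _ (pow_ne_zero 2 hFpos.ne')
  have R4 : (∑ i : Fin d, ∑ j : Fin d,
        ((if i = j then (1:ℝ) else 0)
          - (f (ϱ q) * u q i.succ) * (f (ϱ q) * u q j.succ) / (f (ϱ q) * u q 0)^2)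
          * pder d i.succ (fun z => f (ϱ z) * u z j.succ) q)
      = deriv f (ϱ q) * (∑ i : Fin d, u q i.succ * pder d i.succ ϱ q)
        + f (ϱ q) * (∑ i : Fin d, pder d i.succ (fun z => u z i.succ) q)
        - (deriv f (ϱ q) * (u q 0^2 - 1) * (∑ i : Fin d, u q i.succ * pder d i.succ ϱ q)
            + f (ϱ q) * ∑ i : Fin d, ∑ j : Fin d,
                u q i.succ * u q j.succ * pder d i.succ (fun z => u z j.succ) q) / u q 0^2 := by
    have stepA : (∑ i : Fin d, ∑ j : Fin d,
        ((if i = j then (1:ℝ) else 0)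
          - (f (ϱ q) * u q i.succ) * (f (ϱ q) * u q j.succ) / (f (ϱ q) * u q 0)^2)
          * pder d i.succ (fun z => f (ϱ z) * u z j.succ) q)
        = ∑ i : Fin d, ∑ j : Fin d,
          ((if i = j then (f (ϱ q) * pder d i.succ (fun z => u z j.succ) q
              + u q j.succ * (deriv f (ϱ q) * pder d i.succ ϱ q)) else 0)
          - (u q i.succ * u q j.succ / u q 0^2)
            * (f (ϱ q) * pder d i.succ (fun z => u z j.succ) q
              + u q j.succ * (deriv f (ϱ q) * pder d i.succ ϱ q))) := by
      refine Finset.sum_congr rfl fun i _ => Finset.sum_congr rfl fun j _ => ?_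
      rw [hprod i.succ j.succ, hcancel]
      by_cases h : i = j
      · simp only [if_pos h]; ring
      · simp only [if_neg h]; ring
    rw [stepA]
    rw [show (∑ i : Fin d, ∑ j : Fin d,
          ((if i = j then (f (ϱ q) * pder d i.succ (fun z => u z j.succ) q
              + u q j.succ * (deriv f (ϱ q) * pder d i.succ ϱ q)) else 0)
          - (u q i.succ * u q j.succ / u q 0^2)
            * (f (ϱ q) * pder d i.succ (fun z => u z j.succ) q
              + u q j.succ * (deriv f (ϱ q) * pder d i.succ ϱ q))))
        = (∑ i : Fin d, ∑ j : Fin d,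
            (if i = j then (f (ϱ q) * pder d i.succ (fun z => u z j.succ) q
              + u q j.succ * (deriv f (ϱ q) * pder d i.succ ϱ q)) else 0))
          - ∑ i : Fin d, ∑ j : Fin d, (u q i.succ * u q j.succ / u q 0^2)
            * (f (ϱ q) * pder d i.succ (fun z => u z j.succ) q
              + u q j.succ * (deriv f (ϱ q) * pder d i.succ ϱ q)) by
      simp [Finset.sum_sub_distrib]]
    have hdiag : (∑ i : Fin d, ∑ j : Fin d,
          (if i = j then (f (ϱ q) * pder d i.succ (fun z => u z j.succ) q
            + u q j.succ * (deriv f (ϱ q) * pder d i.succ ϱ q)) else 0))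
        = f (ϱ q) * (∑ i : Fin d, pder d i.succ (fun z => u z i.succ) q)
          + deriv f (ϱ q) * (∑ i : Fin d, u q i.succ * pder d i.succ ϱ q) := by
      have : ∀ i : Fin d, (∑ j : Fin d,
          (if i = j then (f (ϱ q) * pder d i.succ (fun z => u z j.succ) q
            + u q j.succ * (deriv f (ϱ q) * pder d i.succ ϱ q)) else 0))
          = f (ϱ q) * pder d i.succ (fun z => u z i.succ) q
            + u q i.succ * (deriv f (ϱ q) * pder d i.succ ϱ q) := by
        intro i
        rw [Finset.sum_ite_eq]
        simp
      rw [Finset.sum_congr rfl fun i _ => this i, Finset.sum_add_distrib]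
      have h1 : ∑ i : Fin d, f (ϱ q) * pder d i.succ (fun z => u z i.succ) q
          = f (ϱ q) * ∑ i : Fin d, pder d i.succ (fun z => u z i.succ) q :=
        (Finset.mul_sum _ _ _).symm
      have h2' : ∑ i : Fin d, u q i.succ * (deriv f (ϱ q) * pder d i.succ ϱ q)
          = deriv f (ϱ q) * ∑ i : Fin d, u q i.succ * pder d i.succ ϱ q := by
        rw [Finset.mul_sum]
        exact Finset.sum_congr rfl fun i _ => by ring
      rw [h1, h2']
    have hoff : (∑ i : Fin d, ∑ j : Fin d, (u q i.succ * u q j.succ / u q 0^2)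
          * (f (ϱ q) * pder d i.succ (fun z => u z j.succ) q
            + u q j.succ * (deriv f (ϱ q) * pder d i.succ ϱ q)))
        = (∑ i : Fin d, ∑ j : Fin d,
            u q i.succ * u q j.succ * pder d i.succ (fun z => u z j.succ) q) * (f (ϱ q) / u q 0^2)
          + (∑ i : Fin d, u q i.succ * pder d i.succ ϱ q) * (∑ j : Fin d, (u q j.succ)^2)
            * (deriv f (ϱ q) / u q 0^2) := by
      have inner : ∀ i : Fin d, (∑ j : Fin d, (u q i.succ * u q j.succ / u q 0^2)
            * (f (ϱ q) * pder d i.succ (fun z => u z j.succ) q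
              + u q j.succ * (deriv f (ϱ q) * pder d i.succ ϱ q)))
          = (∑ j : Fin d, u q i.succ * u q j.succ * pder d i.succ (fun z => u z j.succ) q)
              * (f (ϱ q) / u q 0^2)
            + (u q i.succ * pder d i.succ ϱ q) * (∑ j : Fin d, (u q j.succ)^2)
              * (deriv f (ϱ q) / u q 0^2) := by
        intro i
        calc (∑ j : Fin d, (u q i.succ * u q j.succ / u q 0^2)
              * (f (ϱ q) * pder d i.succ (fun z => u z j.succ) q
                + u q j.succ * (deriv f (ϱ q) * pder d i.succ ϱ q)))
            = ∑ j : Fin d,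
              ((u q i.succ * u q j.succ * pder d i.succ (fun z => u z j.succ) q)
                  * (f (ϱ q) / u q 0^2)
                + (u q i.succ * pder d i.succ ϱ q) * ((u q j.succ)^2)
                  * (deriv f (ϱ q) / u q 0^2)) :=
              Finset.sum_congr rfl fun j _ => by ring
          _ = _ := by
              rw [Finset.sum_add_distrib, ← Finset.sum_mul]
              congr 1
              rw [← Finset.sum_mul, ← Finset.mul_sum]
      calc (∑ i : Fin d, ∑ j : Fin d, (u q i.succ * u q j.succ / u q 0^2)
            * (f (ϱ q) * pder d i.succ (fun z => u z j.succ) q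
              + u q j.succ * (deriv f (ϱ q) * pder d i.succ ϱ q)))
          = ∑ i : Fin d,
            ((∑ j : Fin d, u q i.succ * u q j.succ * pder d i.succ (fun z => u z j.succ) q)
                * (f (ϱ q) / u q 0^2)
              + (u q i.succ * pder d i.succ ϱ q) * (∑ j : Fin d, (u q j.succ)^2)
                * (deriv f (ϱ q) / u q 0^2)) :=
            Finset.sum_congr rfl fun i _ => inner i
        _ = _ := by
            rw [Finset.sum_add_distrib, ← Finset.sum_mul]
            congr 1
            rw [← Finset.sum_mul, ← Finset.sum_mul]
    rw [hdiag, hoff, hWeq]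
    have hu0ne : u q 0 ≠ 0 := hu0p.ne'
    field_simp
    ring
  have R5 : ∑ i : Fin d, (f (ϱ q) * u q i.succ) * pder d i.succ ϱ q
      = f (ϱ q) * ∑ i : Fin d, u q i.succ * pder d i.succ ϱ q := by
    rw [Finset.mul_sum]
    exact Finset.sum_congr rfl fun i _ => by ring
  rw [R3, R4, R5]
  -- final algebra
  set u0 := u q 0 with hu0def
  set F := f (ϱ q) with hFdef
  set c := deriv peos (ϱ q) with hcdef
  set P := peos (ϱ q) + ϱ q with hPdef
  set fp := deriv f (ϱ q) with hfpdef
  set A0 := pder d 0 ϱ q with hA0def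
  set B00 := pder d 0 (fun z => u z 0) q with hB00def
  set S1 := ∑ i : Fin d, u q i.succ * pder d i.succ ϱ q with hS1def
  set S3 := ∑ i : Fin d, pder d i.succ (fun z => u z i.succ) q with hS3def
  set T0 := ∑ i : Fin d, u q i.succ * pder d i.succ (fun z => u z 0) q with hT0def
  set S4 := ∑ i : Fin d, ∑ j : Fin d,
      u q i.succ * u q j.succ * pder d i.succ (fun z => u z j.succ) q with hS4def
  have hu0ne : u0 ≠ 0 := hu0p.ne'
  have hFne : F ≠ 0 := hFpos.ne'
  have hKne : u0^2 - c*(u0^2-1) ≠ 0 := hKpos.ne'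
  field_simp
  linear_combination (u0^2*F) * he1
    + (u0*F) * he2
    - (P*F) * he5
    + S1 * hf'
    - (u0^2*F*S3 - F*S4 + S1*fp) * hPdef
end
end

section
/- Derivation of the good-variable system for the power-law equation of state: Let κ > 0, p(ϱ) = ϱ^{κ+1}, and let (ϱ,u) be a C¹ solution of the relativistic Euler equations on an open set O ⊂ ℝ^{1+d} with ϱ > 0, u⁰ > 0, u^α u_α = −1, and (κ+1)ϱ^κ < 1. Define r = ((1+κ)/κ) ϱ^κ, f(ϱ) = (1+ϱ^κ)^{1+1/κ}, and v^i = f(ϱ) u^i for i = 1,…,d. Then with ⟨r⟩ = 1 + κr/(κ+1), v⁰ = √(⟨r⟩^{2+2/κ} + |v|²), a₀ = 1 − κ r |v|²/(v⁰)², a₁ = −2κ⟨r⟩^{2+2/κ}/((v⁰)³ a₀), a₂ = ⟨r⟩^{1+2/κ}/v⁰, G^{ij} = (κ⟨r⟩/(a₀ v⁰))(δ^{ij} − v^i v^j/(v⁰)²), and D_t = ∂_t + (v^i/v⁰)∂_i, the pair (r,v) satisfies on O: D_t r + r G^{ij} ∂_i v_j + r a₁ v^i ∂_i r = 0 and D_t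 v_i + a₂ ∂_i r = 0, and moreover v⁰ = f(ϱ) u⁰. -/
open Set

noncomputable section

/-- `⟨r⟩ = 1 + κ r/(κ+1)`. -/
def brk (κ r : ℝ) : ℝ := 1 + κ * r / (κ + 1)

def normSq (d : ℕ) (v : Fin d → ℝ) : ℝ := ∑ i, v i ^ 2

/-- `v⁰ = √(⟨r⟩^{2+2/κ} + |v|²)`. -/
def v0 (d : ℕ) (κ r : ℝ) (v : Fin d → ℝ) : ℝ :=
  Real.sqrt (brk κ r ^ (2 + 2 / κ : ℝ) + normSq d v)

/-- `a₀ = 1 - κ r |v|²/(v⁰)²`. -/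
def a0c (d : ℕ) (κ r : ℝ) (v : Fin d → ℝ) : ℝ :=
  1 - κ * r * normSq d v / v0 d κ r v ^ 2

/-- `a₁ = -2κ⟨r⟩^{2+2/κ}/((v⁰)³ a₀)`. -/
def a1c (d : ℕ) (κ r : ℝ) (v : Fin d → ℝ) : ℝ :=
  -(2 * κ * brk κ r ^ (2 + 2 / κ : ℝ)) / (v0 d κ r v ^ 3 * a0c d κ r v)

/-- `a₂ = ⟨r⟩^{1+2/κ}/v⁰`. -/
def a2c (d : ℕ) (κ r : ℝ) (v : Fin d → ℝ) : ℝ :=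
  brk κ r ^ (1 + 2 / κ : ℝ) / v0 d κ r v

/-- `G^{ij} = (κ⟨r⟩/(a₀ v⁰))(δ^{ij} − v^i v^j/(v⁰)²)`. -/
def Gc (d : ℕ) (κ r : ℝ) (v : Fin d → ℝ) (i j : Fin d) : ℝ :=
  κ * brk κ r / (a0c d κ r v * v0 d κ r v) *
    ((if i = j then (1 : ℝ) else 0) - v i * v j / v0 d κ r v ^ 2)

/-- The good variable `r = ((1+κ)/κ) ϱ^κ`. -/
def rVar (d : ℕ) (κ : ℝ) (ϱ : (Fin (d + 1) → ℝ) → ℝ) (q : Fin (d + 1) → ℝ) : ℝ :=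
  (1 + κ) / κ * ϱ q ^ (κ : ℝ)

/-- `f(ϱ) = (1+ϱ^κ)^{1+1/κ}`. -/
def fκ (κ y : ℝ) : ℝ := (1 + y ^ (κ : ℝ)) ^ (1 + 1 / κ : ℝ)

/-- The good velocity variable `v^i = f(ϱ) u^i`. -/
def vVar (d : ℕ) (κ : ℝ) (ϱ : (Fin (d + 1) → ℝ) → ℝ)
    (u : (Fin (d + 1) → ℝ) → Fin (d + 1) → ℝ) (q : Fin (d + 1) → ℝ) : Fin d → ℝ :=
  fun i => fκ κ (ϱ q) * u q i.succ

lemma pder_eq {d : ℕ} {F : (Fin (d+1) → ℝ) → ℝ} {L : (Fin (d+1) → ℝ) →L[ℝ] ℝ}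
    {q : Fin (d+1) → ℝ} (h : HasFDerivAt F L q) (μ : Fin (d+1)) :
    pder d μ F q = L (Pi.single μ 1) := by rw [pder, h.fderiv]

lemma sum_collapse2 {d : ℕ} (B C : ℝ) (F G : Fin d → ℝ) :
    ∑ l, (B * F l + C * G l) = B * (∑ l, F l) + C * (∑ l, G l) := by
  rw [Finset.sum_add_distrib, Finset.mul_sum, Finset.mul_sum]

set_option maxHeartbeats 2000000 in
/-- **Derivation of the good-variable system** (equations (1.19)): for the power-law
equation of state `p(ϱ) = ϱ^{κ+1}` with `c_s² = (κ+1)ϱ^κ < 1`, the good variables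
`r = ((1+κ)/κ)ϱ^κ`, `v = f(ϱ)u` satisfy
`D_t r + r G^{ij} ∂_i v_j + r a₁ v^i ∂_i r = 0`, `D_t v_i + a₂ ∂_i r = 0`, and
`v⁰ = f(ϱ)u⁰`. -/
theorem good_variable_system_derivation
    (d : ℕ) (hd : 1 ≤ d) (κ : ℝ) (hκ : 0 < κ)
    (O : Set (Fin (d + 1) → ℝ)) (hO : IsOpen O)
    (ϱ : (Fin (d + 1) → ℝ) → ℝ) (u : (Fin (d + 1) → ℝ) → Fin (d + 1) → ℝ)
    (hϱ : ContDiffOn ℝ 1 ϱ O) (hu : ContDiffOn ℝ 1 u O)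
    (hϱpos : ∀ q ∈ O, 0 < ϱ q)
    (hu0 : ∀ q ∈ O, 0 < u q 0)
    (hnorm : ∀ q ∈ O, ∑ α, mlt d α * u q α * u q α = -1)
    (hcs : ∀ q ∈ O, (κ + 1) * ϱ q ^ (κ : ℝ) < 1)
    (heuler : RelEuler d (fun y => y ^ (κ + 1 : ℝ)) O ϱ u) :
    ∀ q ∈ O,
      (pder d 0 (rVar d κ ϱ) q
        + (∑ i : Fin d, (vVar d κ ϱ u q i / v0 d κ (rVar d κ ϱ q) (vVar d κ ϱ u q))
            * pder d i.succ (rVar d κ ϱ) q)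
        + rVar d κ ϱ q * ∑ i, ∑ j, Gc d κ (rVar d κ ϱ q) (vVar d κ ϱ u q) i j
            * pder d i.succ (fun z => fκ κ (ϱ z) * u z j.succ) q
        + rVar d κ ϱ q * a1c d κ (rVar d κ ϱ q) (vVar d κ ϱ u q)
            * ∑ i, vVar d κ ϱ u q i * pder d i.succ (rVar d κ ϱ) q = 0) ∧
      (∀ i : Fin d,
        pder d 0 (fun z => fκ κ (ϱ z) * u z i.succ) q
          + (∑ l : Fin d, (vVar d κ ϱ u q l / v0 d κ (rVar d κ ϱ q) (vVar d κ ϱ u q))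
              * pder d l.succ (fun z => fκ κ (ϱ z) * u z i.succ) q)
          + a2c d κ (rVar d κ ϱ q) (vVar d κ ϱ u q) * pder d i.succ (rVar d κ ϱ) q = 0) ∧
      v0 d κ (rVar d κ ϱ q) (vVar d κ ϱ u q) = fκ κ (ϱ q) * u q 0 := by
  intro q hq
  have hqO : O ∈ nhds q := hO.mem_nhds hq
  have hρ : 0 < ϱ q := hϱpos q hq
  have hU0v : 0 < u q 0 := hu0 q hq
  have hϱat : DifferentiableAt ℝ ϱ q := (hϱ.differentiableOn one_ne_zero).differentiableAt hqO
  have huat : DifferentiableAt ℝ u q := (hu.differentiableOn one_ne_zero).differentiableAt hqO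
  have huα : ∀ α, DifferentiableAt ℝ (fun z => u z α) q :=
    fun α => (differentiableAt_pi.mp huat) α
  set w := ϱ q ^ (κ : ℝ) with hwdef
  set g := (1 + w) ^ (1 / κ : ℝ) with hgdef
  have hw : 0 < w := Real.rpow_pos_of_pos hρ _
  have h1w : (0:ℝ) < 1 + w := by linarith
  have hg : 0 < g := Real.rpow_pos_of_pos h1w _
  have hκ0 : κ ≠ 0 := hκ.ne'
  have hρ0 : ϱ q ≠ 0 := hρ.ne'
  have hg0 : g ≠ 0 := hg.ne'
  have h1w0 : (1:ℝ) + w ≠ 0 := h1w.ne'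
  have hU00 : u q 0 ≠ 0 := hU0v.ne'
  have hρw : ϱ q * (1 + w) ≠ 0 := by positivity
  have hρκ1 : ϱ q ^ (κ + 1 : ℝ) = w * ϱ q := by
    rw [Real.rpow_add hρ, Real.rpow_one, hwdef]
  have hfval : fκ κ (ϱ q) = (1 + w) * g := by
    show (1 + w) ^ (1 + 1 / κ : ℝ) = (1 + w) * g
    rw [Real.rpow_add h1w, Real.rpow_one, hgdef]
  have hrv : rVar d κ ϱ q = (1 + κ) / κ * w := rfl
  have hκ1 : κ + 1 ≠ 0 := by positivity
  have hbrk : brk κ (rVar d κ ϱ q) = 1 + w := by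
    show 1 + κ * ((1 + κ) / κ * w) / (κ + 1) = 1 + w
    field_simp
    ring
  have hpow2 : (1 + w) ^ (2 + 2 / κ : ℝ) = ((1 + w) * g) ^ 2 := by
    rw [show (2 + 2 / κ : ℝ) = (1 + 1 / κ) * 2 by ring, Real.rpow_mul h1w.le,
      Real.rpow_two, Real.rpow_add h1w, Real.rpow_one, hgdef]
  have hpow1 : (1 + w) ^ (1 + 2 / κ : ℝ) = (1 + w) * g ^ 2 := by
    rw [show (1 + 2 / κ : ℝ) = 1 + (1 / κ) * 2 by ring, Real.rpow_add h1w, Real.rpow_one,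
      Real.rpow_mul h1w.le, Real.rpow_two, hgdef]
  have e_r : ∀ μ : Fin (d+1), pder d μ (rVar d κ ϱ) q
      = (1 + κ) * (w / ϱ q) * pder d μ ϱ q := by
    intro μ
    have h1 : HasFDerivAt (fun z => ϱ z ^ (κ:ℝ))
        ((κ * ϱ q ^ ((κ:ℝ) - 1)) • fderiv ℝ ϱ q) q :=
      hϱat.hasFDerivAt.rpow_const (Or.inl hρ.ne')
    have h2 : HasFDerivAt (rVar d κ ϱ)
        (((1 + κ) / κ) • ((κ * ϱ q ^ ((κ:ℝ) - 1)) • fderiv ℝ ϱ q)) q := h1.const_mul _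
    rw [pder_eq h2 μ]
    simp only [ContinuousLinearMap.coe_smul', Pi.smul_apply, smul_eq_mul]
    rw [Real.rpow_sub_one hρ.ne', ← hwdef, pder]
    field_simp
  have e_p : ∀ μ : Fin (d+1), pder d μ (fun z => ϱ z ^ (κ + 1 : ℝ)) q
      = (κ + 1) * w * pder d μ ϱ q := by
    intro μ
    have h1 : HasFDerivAt (fun z => ϱ z ^ (κ + 1 : ℝ))
        (((κ + 1) * ϱ q ^ ((κ + 1 : ℝ) - 1)) • fderiv ℝ ϱ q) q :=
      hϱat.hasFDerivAt.rpow_const (Or.inl hρ.ne')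
    rw [pder_eq h1 μ]
    simp only [ContinuousLinearMap.coe_smul', Pi.smul_apply, smul_eq_mul]
    rw [show (κ + 1 - 1 : ℝ) = κ by ring, ← hwdef, pder]
    all_goals ring
  have e_m : ∀ (μ α : Fin (d+1)), pder d μ (fun z => mlt d α * u z α) q
      = mlt d α * pder d μ (fun z => u z α) q := by
    intro μ α
    rw [pder_eq ((huα α).hasFDerivAt.const_mul (mlt d α)) μ]
    simp only [ContinuousLinearMap.coe_smul', Pi.smul_apply, smul_eq_mul]
    rw [pder]
  have e_v : ∀ (μ α : Fin (d+1)), pder d μ (fun z => fκ κ (ϱ z) * u z α) q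
      = (1 + w) * g * pder d μ (fun z => u z α) q
        + (1 + κ) * (w / ϱ q) * g * pder d μ ϱ q * u q α := by
    intro μ α
    have h1 : HasFDerivAt (fun z => 1 + ϱ z ^ (κ:ℝ))
        ((κ * ϱ q ^ ((κ:ℝ) - 1)) • fderiv ℝ ϱ q) q :=
      (hϱat.hasFDerivAt.rpow_const (Or.inl hρ.ne')).const_add 1
    have h2 : HasFDerivAt (fun z => fκ κ (ϱ z))
        (((1 + 1 / κ) * (1 + ϱ q ^ (κ:ℝ)) ^ ((1 + 1 / κ : ℝ) - 1)) •
          ((κ * ϱ q ^ ((κ:ℝ) - 1)) • fderiv ℝ ϱ q)) q :=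
      h1.rpow_const (Or.inl h1w.ne')
    have h3 := h2.mul (huα α).hasFDerivAt
    rw [pder_eq (F := fun z => fκ κ (ϱ z) * u z α) h3 μ]
    simp only [ContinuousLinearMap.add_apply, ContinuousLinearMap.coe_smul',
      Pi.smul_apply, smul_eq_mul]
    rw [show (1 + 1 / κ : ℝ) - 1 = 1 / κ by ring, Real.rpow_sub_one hρ.ne', hfval,
      ← hwdef, ← hgdef, pder, pder]
    field_simp
    ring
  have hm0 : mlt d 0 = -1 := by simp [mlt]
  have hms : ∀ i : Fin d, mlt d i.succ = 1 := fun i => by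
    simp [mlt, Fin.succ_ne_zero]
  have hdN : ∀ μ : Fin (d+1),
      ∑ l : Fin d, u q l.succ * pder d μ (fun z => u z l.succ) q
        = u q 0 * pder d μ (fun z => u z 0) q := by
    have hα : ∀ α : Fin (d+1), HasFDerivAt (fun z => mlt d α * u z α * u z α)
        ((mlt d α * u q α) • fderiv ℝ (fun z => u z α) q
          + u q α • (mlt d α • fderiv ℝ (fun z => u z α) q)) q :=
      fun α => ((huα α).hasFDerivAt.const_mul (mlt d α)).mul (huα α).hasFDerivAt
    have hsum := HasFDerivAt.fun_sum (u := Finset.univ) (fun α _ => hα α)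
    have hconst : (fun z => ∑ α, mlt d α * u z α * u z α) =ᶠ[nhds q] fun _ => (-1:ℝ) :=
      Filter.eventuallyEq_of_mem hqO hnorm
    have h0 : fderiv ℝ (fun z => ∑ α, mlt d α * u z α * u z α) q = 0 := by
      rw [hconst.fderiv_eq]; exact fderiv_const_apply _
    rw [hsum.fderiv] at h0
    intro μ
    have happ := congrArg (fun (L : (Fin (d+1) → ℝ) →L[ℝ] ℝ) => L (Pi.single μ 1)) h0
    simp only [ContinuousLinearMap.sum_apply, ContinuousLinearMap.add_apply,
      ContinuousLinearMap.coe_smul', Pi.smul_apply, smul_eq_mul,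
      ContinuousLinearMap.zero_apply] at happ
    have h2 : ∑ α, (mlt d α * u q α * (fderiv ℝ (fun z => u z α) q) (Pi.single μ 1)
        + u q α * (mlt d α * (fderiv ℝ (fun z => u z α) q) (Pi.single μ 1)))
        = 2 * ∑ α, mlt d α * u q α * pder d μ (fun z => u z α) q := by
      rw [Finset.mul_sum]; exact Finset.sum_congr rfl fun α _ => by rw [pder]; ring
    rw [h2] at happ
    have h3 : ∑ α, mlt d α * u q α * pder d μ (fun z => u z α) q = 0 := by linarith
    rw [Fin.sum_univ_succ, hm0] at h3
    have hc : ∀ l : Fin d, mlt d l.succ * u q l.succ * pder d μ (fun z => u z l.succ) q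
        = u q l.succ * pder d μ (fun z => u z l.succ) q := fun l => by rw [hms]; ring
    rw [Finset.sum_congr rfl fun l _ => hc l] at h3
    linarith
  have hU2 : ∑ l : Fin d, u q l.succ ^ 2 = u q 0 ^ 2 - 1 := by
    have h := hnorm q hq
    rw [Fin.sum_univ_succ, hm0] at h
    have hc : ∀ l : Fin d, mlt d l.succ * u q l.succ * u q l.succ = u q l.succ ^ 2 :=
      fun l => by rw [hms]; ring
    rw [Finset.sum_congr rfl fun l _ => hc l] at h
    nlinarith [h]
  have hvv : ∀ i : Fin d, vVar d κ ϱ u q i = (1 + w) * g * u q i.succ := fun i => by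
    show fκ κ (ϱ q) * u q i.succ = (1 + w) * g * u q i.succ
    rw [hfval]
  have hns : normSq d (vVar d κ ϱ u q) = ((1 + w) * g) ^ 2 * (u q 0 ^ 2 - 1) := by
    show ∑ i, vVar d κ ϱ u q i ^ 2 = ((1 + w) * g) ^ 2 * (u q 0 ^ 2 - 1)
    rw [Finset.sum_congr rfl fun i (_ : i ∈ Finset.univ) =>
      (by rw [hvv i]; ring : vVar d κ ϱ u q i ^ 2 = ((1 + w) * g) ^ 2 * u q i.succ ^ 2),
      ← Finset.mul_sum, hU2]
  have hv0 : v0 d κ (rVar d κ ϱ q) (vVar d κ ϱ u q) = (1 + w) * g * u q 0 := by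
    show Real.sqrt (brk κ (rVar d κ ϱ q) ^ (2 + 2 / κ : ℝ) + normSq d (vVar d κ ϱ u q))
      = (1 + w) * g * u q 0
    rw [hbrk, hpow2, hns,
      show ((1+w)*g)^2 + ((1+w)*g)^2 * (u q 0 ^ 2 - 1) = ((1+w)*g*u q 0)^2 by ring]
    exact Real.sqrt_sq (by positivity)
  obtain ⟨A0, hA0e⟩ : ∃ x : ℝ, x = 1 - (κ+1)*w*(u q 0 ^ 2 - 1)/u q 0 ^ 2 := ⟨_, rfl⟩
  have ha0 : a0c d κ (rVar d κ ϱ q) (vVar d κ ϱ u q) = A0 := by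
    show 1 - κ * rVar d κ ϱ q * normSq d (vVar d κ ϱ u q)
        / v0 d κ (rVar d κ ϱ q) (vVar d κ ϱ u q) ^ 2 = A0
    rw [hns, hv0, hrv, hA0e]
    field_simp
    ring
  have hcs' : (κ+1)*w < 1 := by
    have h := hcs q hq
    rwa [← hwdef] at h
  have hU21 : 1 ≤ u q 0 ^ 2 := by
    have hnn : 0 ≤ ∑ l : Fin d, u q l.succ ^ 2 :=
      Finset.sum_nonneg fun l _ => sq_nonneg _
    nlinarith [hU2, hnn]
  have ha0pos : 0 < A0 := by
    have hU0sq : (0:ℝ) < u q 0 ^ 2 := by positivity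
    rw [hA0e, sub_pos, div_lt_one hU0sq]
    nlinarith [mul_nonneg (le_of_lt (sub_pos.2 hcs')) (sub_nonneg.2 hU21)]
  have hA00 : A0 ≠ 0 := ha0pos.ne'
  -- Euler equations in clean form
  have hEcA : (∑ μ, u q μ * pder d μ ϱ q)
      + (ϱ q ^ (κ + 1 : ℝ) + ϱ q) * ∑ μ, pder d μ (fun z => u z μ) q = 0 := (heuler q hq).1
  have hcont : (u q 0 * pder d 0 ϱ q + ∑ l : Fin d, u q l.succ * pder d l.succ ϱ q)
      + (w * ϱ q + ϱ q) * (pder d 0 (fun z => u z 0) q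
        + ∑ l : Fin d, pder d l.succ (fun z => u z l.succ) q) = 0 := by
    rw [hρκ1, Fin.sum_univ_succ, Fin.sum_univ_succ] at hEcA
    linear_combination hEcA
  have hEmA : ∀ α : Fin (d+1), (ϱ q ^ (κ + 1 : ℝ) + ϱ q)
        * (∑ μ, u q μ * pder d μ (fun z => mlt d α * u z α) q)
      + pder d α (fun z => ϱ z ^ (κ + 1 : ℝ)) q
      + mlt d α * u q α * ∑ μ, u q μ * pder d μ (fun z => ϱ z ^ (κ + 1 : ℝ)) q = 0 :=
    fun α => (heuler q hq).2 α
  have h1sum : ∀ α : Fin (d+1), (∑ μ, u q μ * pder d μ (fun z => mlt d α * u z α) q)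
      = mlt d α * (u q 0 * pder d 0 (fun z => u z α) q
        + ∑ l : Fin d, u q l.succ * pder d l.succ (fun z => u z α) q) := by
    intro α
    rw [Fin.sum_univ_succ,
      Finset.sum_congr rfl (fun l (_ : l ∈ Finset.univ) =>
        (by rw [e_m]; ring : u q l.succ * pder d l.succ (fun z => mlt d α * u z α) q
          = mlt d α * (u q l.succ * pder d l.succ (fun z => u z α) q))),
      ← Finset.mul_sum, e_m]
    ring
  have h2sum : (∑ μ, u q μ * pder d μ (fun z => ϱ z ^ (κ + 1 : ℝ)) q)
      = (κ+1)*w*(u q 0 * pder d 0 ϱ q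
        + ∑ l : Fin d, u q l.succ * pder d l.succ ϱ q) := by
    rw [Fin.sum_univ_succ,
      Finset.sum_congr rfl (fun l (_ : l ∈ Finset.univ) =>
        (by rw [e_p]; ring : u q l.succ * pder d l.succ (fun z => ϱ z ^ (κ + 1 : ℝ)) q
          = (κ+1)*w*(u q l.succ * pder d l.succ ϱ q))),
      ← Finset.mul_sum, e_p]
    ring
  have hmom : ∀ α : Fin (d+1),
      (w * ϱ q + ϱ q) * (mlt d α * (u q 0 * pder d 0 (fun z => u z α) q
        + ∑ l : Fin d, u q l.succ * pder d l.succ (fun z => u z α) q))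
      + (κ+1)*w*pder d α ϱ q
      + mlt d α * u q α * ((κ+1)*w*(u q 0 * pder d 0 ϱ q
        + ∑ l : Fin d, u q l.succ * pder d l.succ ϱ q)) = 0 := by
    intro α
    have h := hEmA α
    rw [hρκ1, e_p α, h2sum, h1sum α] at h
    linear_combination h
  refine ⟨?_, ?_, ?_⟩
  · -- equation for r
    obtain ⟨K0, hK0e⟩ : ∃ x : ℝ, x = κ*(1+w)/(A0*((1+w)*g*u q 0)) := ⟨_, rfl⟩
    obtain ⟨CQ, hCQe⟩ : ∃ x : ℝ, x = -K0*((1+w)*g)^2/(((1+w)*g*u q 0)^2) := ⟨_, rfl⟩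
    have hGval : ∀ i j : Fin d, Gc d κ (rVar d κ ϱ q) (vVar d κ ϱ u q) i j
        = K0 * ((if i = j then (1:ℝ) else 0)
          - (1+w)*g*u q i.succ * ((1+w)*g*u q j.succ) / ((1+w)*g*u q 0)^2) := by
      intro i j
      show κ * brk κ (rVar d κ ϱ q)
          / (a0c d κ (rVar d κ ϱ q) (vVar d κ ϱ u q) * v0 d κ (rVar d κ ϱ q) (vVar d κ ϱ u q))
          * ((if i = j then (1:ℝ) else 0)
            - vVar d κ ϱ u q i * vVar d κ ϱ u q j
              / v0 d κ (rVar d κ ϱ q) (vVar d κ ϱ u q) ^ 2) = _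
      rw [hbrk, ha0, hv0, hvv i, hvv j, hK0e]
    have hterm : ∀ i j : Fin d,
        Gc d κ (rVar d κ ϱ q) (vVar d κ ϱ u q) i j
          * pder d i.succ (fun z => fκ κ (ϱ z) * u z j.succ) q
        = (if i = j then K0 * ((1+w)*g*pder d i.succ (fun z => u z j.succ) q
            + (1+κ)*(w/ϱ q)*g*pder d i.succ ϱ q * u q j.succ) else 0)
          + (CQ * u q i.succ * ((1+w)*g))
              * (u q j.succ * pder d i.succ (fun z => u z j.succ) q)
          + (CQ * u q i.succ * ((1+κ)*(w/ϱ q)*g) * pder d i.succ ϱ q) * u q j.succ ^ 2 := by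
      intro i j
      rw [hGval i j, e_v, hCQe]
      by_cases h : i = j
      · rw [if_pos h, if_pos h, h]; ring
      · rw [if_neg h, if_neg h]; ring
    have hinner : ∀ i : Fin d,
        (∑ j : Fin d, Gc d κ (rVar d κ ϱ q) (vVar d κ ϱ u q) i j
          * pder d i.succ (fun z => fκ κ (ϱ z) * u z j.succ) q)
        = (K0*((1+w)*g)) * pder d i.succ (fun z => u z i.succ) q
          + (K0*((1+κ)*(w/ϱ q)*g) + CQ*((1+κ)*(w/ϱ q)*g)*(u q 0 ^ 2 - 1))
              * (u q i.succ * pder d i.succ ϱ q)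
          + (CQ*((1+w)*g)*u q 0) * (u q i.succ * pder d i.succ (fun z => u z 0) q) := by
      intro i
      refine Eq.trans (Finset.sum_congr rfl fun j _ => hterm i j) ?_
      rw [Finset.sum_add_distrib, Finset.sum_add_distrib, Finset.sum_ite_eq,
        if_pos (Finset.mem_univ i), ← Finset.mul_sum, ← Finset.mul_sum, hdN i.succ, hU2]
      ring
    have hcolG : (∑ i : Fin d, ∑ j : Fin d, Gc d κ (rVar d κ ϱ q) (vVar d κ ϱ u q) i j
          * pder d i.succ (fun z => fκ κ (ϱ z) * u z j.succ) q)
        = (K0*((1+w)*g)) * (∑ i : Fin d, pder d i.succ (fun z => u z i.succ) q)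
          + (K0*((1+κ)*(w/ϱ q)*g) + CQ*((1+κ)*(w/ϱ q)*g)*(u q 0 ^ 2 - 1))
              * (∑ i : Fin d, u q i.succ * pder d i.succ ϱ q)
          + (CQ*((1+w)*g)*u q 0)
              * (∑ i : Fin d, u q i.succ * pder d i.succ (fun z => u z 0) q) := by
      refine Eq.trans (Finset.sum_congr rfl fun i _ => hinner i) ?_
      rw [Finset.sum_add_distrib, Finset.sum_add_distrib, ← Finset.mul_sum,
        ← Finset.mul_sum, ← Finset.mul_sum]
    have hcolA : (∑ i : Fin d, vVar d κ ϱ u q i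
            / v0 d κ (rVar d κ ϱ q) (vVar d κ ϱ u q) * pder d i.succ (rVar d κ ϱ) q)
        = ((1+w)*g*((1+κ)*(w/ϱ q))/((1+w)*g*u q 0))
            * (∑ i : Fin d, u q i.succ * pder d i.succ ϱ q) := by
      rw [Finset.mul_sum]
      refine Finset.sum_congr rfl fun i _ => ?_
      rw [e_r, hv0, hvv i]; ring
    have hcolB : (∑ i : Fin d, vVar d κ ϱ u q i * pder d i.succ (rVar d κ ϱ) q)
        = ((1+w)*g*((1+κ)*(w/ϱ q)))
            * (∑ i : Fin d, u q i.succ * pder d i.succ ϱ q) := by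
      rw [Finset.mul_sum]
      refine Finset.sum_congr rfl fun i _ => ?_
      rw [e_r, hvv i]; ring
    have ha1 : a1c d κ (rVar d κ ϱ q) (vVar d κ ϱ u q)
        = -(2*κ*((1+w)*g)^2)/(((1+w)*g*u q 0)^3*A0) := by
      show -(2 * κ * brk κ (rVar d κ ϱ q) ^ (2 + 2 / κ : ℝ))
          / (v0 d κ (rVar d κ ϱ q) (vVar d κ ϱ u q) ^ 3
            * a0c d κ (rVar d κ ϱ q) (vVar d κ ϱ u q)) = _
      rw [hbrk, hpow2, hv0, ha0]
    have hTrS : (∑ l : Fin d, pder d l.succ (fun z => u z l.succ) q)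
        = -(u q 0 * pder d 0 ϱ q + ∑ l : Fin d, u q l.succ * pder d l.succ ϱ q)
            / (ϱ q * (1 + w)) - pder d 0 (fun z => u z 0) q := by
      rw [eq_sub_iff_add_eq, eq_div_iff hρw]
      linear_combination hcont
    have hN : (∑ l : Fin d, u q l.succ * pder d l.succ (fun z => u z 0) q)
        = ((κ+1)*w*pder d 0 ϱ q - u q 0*((κ+1)*w*(u q 0 * pder d 0 ϱ q
            + ∑ l : Fin d, u q l.succ * pder d l.succ ϱ q)))/(ϱ q * (1 + w))
          - u q 0 * pder d 0 (fun z => u z 0) q := by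
      have h := hmom 0
      rw [hm0] at h
      rw [eq_sub_iff_add_eq, eq_div_iff hρw]
      linear_combination -h
    rw [e_r 0, hcolA, hcolG, hcolB, ha1, hrv, hTrS, hN, hCQe, hK0e, hA0e]
    have hden : u q 0 ^ 2 - (κ+1)*w*(u q 0 ^ 2 - 1) ≠ 0 := by
      have : 0 < u q 0 ^ 2 - (κ+1)*w*(u q 0 ^ 2 - 1) := by
        nlinarith [mul_nonneg (le_of_lt (sub_pos.2 hcs')) (sub_nonneg.2 hU21)]
      exact this.ne'
    have hA0split : (1:ℝ) - (κ+1)*w*(u q 0 ^ 2 - 1)/u q 0 ^ 2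
        = (u q 0 ^ 2 - (κ+1)*w*(u q 0 ^ 2 - 1))/u q 0 ^ 2 := by
      field_simp
    rw [hA0split]
    field_simp
    have hden2 : u q 0 ^ 2 - w * (κ + 1) * (u q 0 ^ 2 - 1) ≠ 0 := by rw [mul_comm w]; exact hden
    rw [mul_zero]
    apply mul_eq_zero_of_right
    rw [← sub_eq_add_neg, add_sub_assoc, ← sub_div, add_div_eq_mul_add_div _ _ hden2,
      div_eq_zero_iff]
    exact Or.inl (by ring)
  · -- equation for v
    intro i
    have hcol2 : (∑ l : Fin d, vVar d κ ϱ u q l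
          / v0 d κ (rVar d κ ϱ q) (vVar d κ ϱ u q)
          * pder d l.succ (fun z => fκ κ (ϱ z) * u z i.succ) q)
        = ((1+w)*g*((1+w)*g)/((1+w)*g*u q 0))
            * (∑ l : Fin d, u q l.succ * pder d l.succ (fun z => u z i.succ) q)
          + ((1+w)*g*((1+κ)*(w/ϱ q)*g)*u q i.succ/((1+w)*g*u q 0))
            * (∑ l : Fin d, u q l.succ * pder d l.succ ϱ q) := by
      refine Eq.trans (Finset.sum_congr rfl fun l _ => ?_)
        (sum_collapse2 ((1+w)*g*((1+w)*g)/((1+w)*g*u q 0))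
          ((1+w)*g*((1+κ)*(w/ϱ q)*g)*u q i.succ/((1+w)*g*u q 0))
          (fun l => u q l.succ * pder d l.succ (fun z => u z i.succ) q)
          (fun l => u q l.succ * pder d l.succ ϱ q))
      rw [e_v, hv0, hvv l]; ring
    have ha2 : a2c d κ (rVar d κ ϱ q) (vVar d κ ϱ u q)
        = (1+w)*g^2/((1+w)*g*u q 0) := by
      show brk κ (rVar d κ ϱ q) ^ (1 + 2 / κ : ℝ)
          / v0 d κ (rVar d κ ϱ q) (vVar d κ ϱ u q) = _
      rw [hbrk, hpow1, hv0]
    have hMi : (∑ l : Fin d, u q l.succ * pder d l.succ (fun z => u z i.succ) q)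
        = (-((κ+1)*w*pder d i.succ ϱ q) - u q i.succ*((κ+1)*w*(u q 0 * pder d 0 ϱ q
            + ∑ l : Fin d, u q l.succ * pder d l.succ ϱ q)))/(ϱ q * (1 + w))
          - u q 0 * pder d 0 (fun z => u z i.succ) q := by
      have h := hmom i.succ
      rw [hms i] at h
      rw [eq_sub_iff_add_eq, eq_div_iff hρw]
      linear_combination h
    rw [hcol2, e_v 0 i.succ, ha2, e_r i.succ, hMi]
    field_simp
    ring
  · -- v⁰ = f(ϱ) u⁰
    rw [hv0, hfval]
end
end
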